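/- arXiv:1907.06951 — 2 statements merged into one kernel-verified Lean document; each statement's English description precedes it below -/
import Mathlib

section
/- For n ≥ 4, there exists a perfect matching M of the folded hypercube FQ_n such that FQ_n − M is not isomorphic to the hypercube Q_n. Hence the conjecture of Dong and Wang, that FQ_n minus a perfect matching is always isomorphic to Q_n, is false. -/
open SimpleGraph

def cmpl {n : ℕ} (x : Fin n → Bool) : Fin n → Bool := fun i => !x i

/-- The `n`-dimensional hypercube on vertex set `{0,1}^n`. -/
def Q (n : ℕ) : SimpleGraph (Fin n → Bool) where
  Adj x y := hammingDist x y = 1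
  symm := ⟨fun x y h => (hammingDist_comm y x).trans h⟩
  loopless := ⟨fun x h => by simp [hammingDist_self] at h⟩

/-- The folded hypercube: `Q n` plus all complement edges. -/
def FQ (n : ℕ) : SimpleGraph (Fin n → Bool) where
  Adj x y := hammingDist x y = 1 ∨ (x ≠ y ∧ y = cmpl x)
  symm := by
    constructor
    intro x y h
    rcases h with h | ⟨hne, he⟩
    · exact Or.inl ((hammingDist_comm y x).trans h)
    · refine Or.inr ⟨hne.symm, ?_⟩
      subst he; funext i; simp [cmpl]
  loopless := by
    constructor
    intro x h
    rcases h with h | ⟨hne, _⟩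
    · simp [hammingDist_self] at h
    · exact hne rfl

/-- The set of hypercube edges in coordinate direction `j`. -/
def Mdir (n : ℕ) (j : Fin n) : Set (Sym2 (Fin n → Bool)) :=
  {e | ∃ x, e = s(x, Function.update x j (!x j))}

/-- The set of complement edges. -/
def M2 (n : ℕ) : Set (Sym2 (Fin n → Bool)) := {e | ∃ x, e = s(x, cmpl x)}

/-- `M` is a perfect matching of `G`: a set of edges of `G` such that every
vertex lies in exactly one edge of `M`. -/
def IsPerfectMatchingSet {V : Type*} (G : SimpleGraph V) (M : Set (Sym2 V)) : Prop :=
  M ⊆ G.edgeSet ∧ ∀ v : V, ∃! e, e ∈ M ∧ v ∈ e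

lemma cmpl_cmpl {n : ℕ} (x : Fin n → Bool) : cmpl (cmpl x) = x := by
  funext i; simp [cmpl]

lemma dist_update {n : ℕ} (x : Fin n → Bool) (i : Fin n) :
    hammingDist x (Function.update x i (!x i)) = 1 := by
  show (Finset.univ.filter fun k => x k ≠ Function.update x i (!x i) k).card = 1
  have : (Finset.univ.filter fun k => x k ≠ Function.update x i (!x i) k) = {i} := by
    ext k
    simp only [Finset.mem_filter, Finset.mem_univ, true_and, Finset.mem_singleton,
      Function.update_apply]
    by_cases hk : k = i <;> simp [hk]
  rw [this, Finset.card_singleton]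

lemma dist_one_upd {n : ℕ} {x y : Fin n → Bool} (h : hammingDist x y = 1) :
    ∃ i, y = Function.update x i (!x i) := by
  have h' : (Finset.univ.filter fun k => x k ≠ y k).card = 1 := h
  obtain ⟨i, hi⟩ := Finset.card_eq_one.mp h'
  refine ⟨i, funext fun k => ?_⟩
  by_cases hk : k = i
  · subst hk
    have : x k ≠ y k := by
      have : k ∈ Finset.univ.filter fun k => x k ≠ y k := by rw [hi]; simp
      simpa using this
    rw [Function.update_self]
    cases hx : x k <;> cases hy : y k <;> simp_all
  · rw [Function.update_of_ne hk]
    by_contra hne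
    have : k ∈ Finset.univ.filter fun k => x k ≠ y k := by
      simp only [Finset.mem_filter, Finset.mem_univ, true_and]
      intro h'; exact hne h'.symm
    rw [hi] at this
    simp at this
    exact hk this

lemma Q_adj {n : ℕ} (a b : Fin n → Bool) : (Q n).Adj a b ↔ hammingDist a b = 1 := Iff.rfl

/-- The "pair-extension" property, true in `Q n`. -/
lemma Q_ext {n : ℕ} (u v w : Fin n → Bool) (huv : (Q n).Adj u v) (huw : (Q n).Adj u w)
    (hwv : w ≠ v) : ∃ z, z ≠ u ∧ (Q n).Adj z v ∧ (Q n).Adj z w := by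
  obtain ⟨i, hi⟩ := dist_one_upd huv
  obtain ⟨j, hj⟩ := dist_one_upd huw
  have hij : i ≠ j := by rintro rfl; exact hwv (hj.trans hi.symm)
  refine ⟨Function.update (Function.update u i (!u i)) j (!u j), ?_, ?_, ?_⟩
  · intro h
    have := congrFun h i
    rw [Function.update_of_ne hij, Function.update_self] at this
    cases u i <;> simp_all
  · have hz : Function.update (Function.update u i (!u i)) j (!u j)
        = Function.update v j (!v j) := by
      rw [hi, Function.update_of_ne (Ne.symm hij)]
    rw [Q_adj, hz, hammingDist_comm]
    exact dist_update v j
  · have hz : Function.update (Function.update u i (!u i)) j (!u j)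
        = Function.update w i (!w i) := by
      rw [Function.update_comm hij, hj, Function.update_of_ne hij]
    rw [Q_adj, hz, hammingDist_comm]
    exact dist_update w i

def Mmix {n : ℕ} (i0 i1 i2 : Fin n) : Set (Sym2 (Fin n → Bool)) :=
  {e | ∃ x : Fin n → Bool,
    (x i0 = x i1 ∧ e = s(x, Function.update x i2 (!x i2))) ∨
    (x i0 ≠ x i1 ∧ e = s(x, cmpl x))}

lemma FQ_adj {n : ℕ} (a b : Fin n → Bool) :
    (FQ n).Adj a b ↔ hammingDist a b = 1 ∨ (a ≠ b ∧ b = cmpl a) := Iff.rfl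

lemma update_ne_self {n : ℕ} (x : Fin n → Bool) (i : Fin n) :
    x ≠ Function.update x i (!x i) := by
  intro h
  have := congrFun h i
  rw [Function.update_self] at this
  simp at this

lemma cmpl_ne_self {n : ℕ} (hpos : 0 < n) (x : Fin n → Bool) : x ≠ cmpl x := by
  intro h
  have := congrFun h ⟨0, hpos⟩
  simp [cmpl] at this

lemma Mmix_matching {n : ℕ} (i0 i1 i2 : Fin n) (h01 : i0 ≠ i1) (h02 : i0 ≠ i2)
    (h12 : i1 ≠ i2) (hpos : 0 < n) :
    IsPerfectMatchingSet (FQ n) (Mmix i0 i1 i2) := by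
  constructor
  · rintro e ⟨x, ⟨-, rfl⟩ | ⟨hx, rfl⟩⟩
    · exact (FQ n).mem_edgeSet.mpr (Or.inl (dist_update x i2))
    · exact (FQ n).mem_edgeSet.mpr (Or.inr ⟨cmpl_ne_self hpos x, rfl⟩)
  · intro v
    by_cases hv : v i0 = v i1
    · refine ⟨s(v, Function.update v i2 (!v i2)), ⟨⟨v, Or.inl ⟨hv, rfl⟩⟩, by simp⟩, ?_⟩
      rintro e ⟨⟨x, ⟨hx, rfl⟩ | ⟨hx, rfl⟩⟩, hve⟩
      · rcases Sym2.mem_iff.mp hve with rfl | rfl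
        · rfl
        · -- v = update x i2 (!x i2)
          have hxv : x = Function.update (Function.update x i2 (!x i2)) i2
              (!(Function.update x i2 (!x i2)) i2) := by
            rw [Function.update_self, Function.update_idem]
            cases hb : x i2 <;> simp [hb, Function.update_eq_self]
          rw [← hxv]
          exact Sym2.eq_swap
      · exfalso
        rcases Sym2.mem_iff.mp hve with rfl | rfl
        · exact hx hv
        · apply hx
          simpa [cmpl] using hv
    · refine ⟨s(v, cmpl v), ⟨⟨v, Or.inr ⟨hv, rfl⟩⟩, by simp⟩, ?_⟩
      rintro e ⟨⟨x, ⟨hx, rfl⟩ | ⟨hx, rfl⟩⟩, hve⟩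
      · exfalso
        rcases Sym2.mem_iff.mp hve with rfl | rfl
        · exact hv hx
        · apply hv
          rw [Function.update_of_ne h02, Function.update_of_ne h12]
          exact hx
      · rcases Sym2.mem_iff.mp hve with rfl | rfl
        · rfl
        · rw [cmpl_cmpl]
          exact Sym2.eq_swap

/-- For `n ≥ 4`, there is a perfect matching of `FQ n` whose removal does not yield a graph
isomorphic to `Q n`, disproving the conjecture of Dong and Wang. -/
theorem stmt7 (n : ℕ) (hn : 4 ≤ n) :
    ∃ M : Set (Sym2 (Fin n → Bool)), IsPerfectMatchingSet (FQ n) M ∧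
      ¬ Nonempty ((FQ n).deleteEdges M ≃g Q n) := by
  set i0 : Fin n := ⟨0, by omega⟩ with hi0
  set i1 : Fin n := ⟨1, by omega⟩ with hi1
  set i2 : Fin n := ⟨2, by omega⟩ with hi2
  have h01 : i0 ≠ i1 := by simp [hi0, hi1, Fin.ext_iff]
  have h02 : i0 ≠ i2 := by simp [hi0, hi2, Fin.ext_iff]
  have h12 : i1 ≠ i2 := by simp [hi1, hi2, Fin.ext_iff]
  refine ⟨Mmix i0 i1 i2, Mmix_matching i0 i1 i2 h01 h02 h12 (by omega), ?_⟩
  rintro ⟨φ⟩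
  set G := (FQ n).deleteEdges (Mmix i0 i1 i2) with hG
  -- the witnesses
  set u : Fin n → Bool := fun _ => false with hu
  set v : Fin n → Bool := fun _ => true with hv
  set w : Fin n → Bool := Function.update u i0 (!u i0) with hw
  have hvcmpl : v = cmpl u := by funext k; simp [hu, hv, cmpl]
  have hwi0 : w i0 = true := by simp [hw, hu]
  have hwi1 : w i1 = false := by rw [hw, Function.update_of_ne h01.symm]
  -- G.Adj u v
  have huv : G.Adj u v := by
    rw [hG, SimpleGraph.deleteEdges_adj]
    constructor
    · exact Or.inr ⟨by intro h; simpa [hu, hv] using congrFun h i0, hvcmpl⟩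
    · rintro ⟨x, ⟨hx, he⟩ | ⟨hx, he⟩⟩
      · rcases Sym2.eq_iff.mp he with ⟨rfl, hy⟩ | ⟨hy, rfl⟩
        · have := congrFun hy i0
          rw [Function.update_of_ne h02] at this
          simp [hu, hv] at this
        · have := congrFun hy i0
          rw [Function.update_of_ne h02] at this
          simp [hu, hv] at this
      · rcases Sym2.eq_iff.mp he with ⟨rfl, -⟩ | ⟨-, rfl⟩
        · simp [hu] at hx
        · simp [hv] at hx
  -- G.Adj u w
  have huw : G.Adj u w := by
    rw [hG, SimpleGraph.deleteEdges_adj]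
    constructor
    · exact Or.inl (dist_update u i0)
    · rintro ⟨x, ⟨hx, he⟩ | ⟨hx, he⟩⟩
      · rcases Sym2.eq_iff.mp he with ⟨rfl, hy⟩ | ⟨hy, rfl⟩
        · have := congrFun hy i0
          rw [Function.update_of_ne h02] at this
          simp [hu] at this
          rw [this] at hwi0
          simp at hwi0
        · have h1 := congrFun hy i0
          rw [Function.update_of_ne h02] at h1
          rw [hwi0] at h1
          simp [hu] at h1
      · rcases Sym2.eq_iff.mp he with ⟨rfl, hy⟩ | ⟨hy, rfl⟩
        · have := congrFun hy i1
          rw [hwi1] at this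
          simp [cmpl, hu] at this
        · have := congrFun hy i1
          simp [cmpl, hu, hwi1] at this
  have hwv : w ≠ v := by
    intro h
    rw [h] at hwi1
    simp [hv] at hwi1
  -- distance between v and w is n - 1
  have hdvw : hammingDist v w = n - 1 := by
    have : (Finset.univ.filter fun k => v k ≠ w k) = Finset.univ.erase i0 := by
      ext k
      simp only [Finset.mem_filter, Finset.mem_univ, true_and, Finset.mem_erase, and_true]
      by_cases hk : k = i0
      · subst hk; simp [hv, hwi0]
      · rw [hw, Function.update_of_ne hk]
        simp [hv, hu, hk]
    show (Finset.univ.filter fun k => v k ≠ w k).card = n - 1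
    rw [this, Finset.card_erase_of_mem (Finset.mem_univ _), Finset.card_univ]
    simp
  -- no common neighbor of v and w besides u
  have hnoz : ∀ z, z ≠ u → ¬ (G.Adj z v ∧ G.Adj z w) := by
    rintro z hz ⟨hzv, hzw⟩
    rw [hG, SimpleGraph.deleteEdges_adj] at hzv hzw
    obtain ⟨hzv1, hzv2⟩ := hzv
    obtain ⟨hzw1, hzw2⟩ := hzw
    rcases hzv1 with hdzv | ⟨-, hcv⟩
    · rcases hzw1 with hdzw | ⟨-, hcw⟩
      · -- triangle inequality contradiction
        have := hammingDist_triangle v z w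
        rw [hammingDist_comm v z, hdzv, hdzw, hdvw] at this
        omega
      · -- w = cmpl z, so s(z,w) is a complement edge with w i0 ≠ w i1 : in Mmix
        apply hzw2
        refine ⟨w, Or.inr ⟨by rw [hwi0, hwi1]; simp, ?_⟩⟩
        rw [Sym2.eq_swap]
        congr 1
        rw [hcw, cmpl_cmpl]
    · -- v = cmpl z means z = cmpl v = u
      apply hz
      rw [← cmpl_cmpl z, ← hcv, hvcmpl, cmpl_cmpl]
  -- transfer the extension property through φ
  obtain ⟨z', hz'u, hz'v, hz'w⟩ :=
    Q_ext (φ u) (φ v) (φ w) (φ.map_adj_iff.mpr huv) (φ.map_adj_iff.mpr huw)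
      (fun h => hwv (φ.injective h))
  refine hnoz (φ.symm z') (fun h => hz'u ?_) ⟨?_, ?_⟩
  · rw [← φ.apply_symm_apply z', h]
  · have := φ.symm.map_adj_iff.mpr hz'v
    rwa [φ.symm_apply_apply] at this
  · have := φ.symm.map_adj_iff.mpr hz'w
    rwa [φ.symm_apply_apply] at this
end

section
/- For n ≥ 4, let M be a perfect matching of FQ_n contained in M_1 ∪ M_2 with M ≠ M_1 and M ≠ M_2, where M_1 is the set of last-coordinate hypercube edges and M_2 is the set of complement edges. Then FQ_n − M is not isomorphic to Q_n. -/
open SimpleGraph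

lemma bool_flip {a b : Bool} (h : a ≠ b) : b = !a := by cases a <;> cases b <;> simp_all

lemma flip_flip' {n : ℕ} (x : Fin n → Bool) (a : Fin n) :
    Function.update (Function.update x a (!x a)) a (!(Function.update x a (!x a)) a) = x := by
  funext k
  by_cases h : k = a <;> simp [Function.update, h]

lemma hamming_one_iff {n : ℕ} (x y : Fin n → Bool) :
    hammingDist x y = 1 ↔ ∃ a, y = Function.update x a (!x a) := by
  constructor
  · intro h
    have h' : (Finset.univ.filter fun i => x i ≠ y i).card = 1 := h
    obtain ⟨a, ha⟩ := Finset.card_eq_one.mp h'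
    refine ⟨a, funext fun k => ?_⟩
    by_cases hk : k = a
    · subst hk
      have : k ∈ Finset.univ.filter fun i => x i ≠ y i := by rw [ha]; exact Finset.mem_singleton_self k
      have := (Finset.mem_filter.mp this).2
      simp [bool_flip this]
    · have : k ∉ Finset.univ.filter fun i => x i ≠ y i := by
        rw [ha]; simp [hk]
      simp only [Finset.mem_filter, Finset.mem_univ, true_and, not_not] at this
      simp [Function.update, hk, this]
  · rintro ⟨a, rfl⟩
    show (Finset.univ.filter fun i => x i ≠ Function.update x a (!x a) i).card = 1
    have : (Finset.univ.filter fun i => x i ≠ Function.update x a (!x a) i) = {a} := by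
      ext k
      by_cases hk : k = a <;> simp [Function.update, hk]
    rw [this, Finset.card_singleton]

lemma Q_prop {n : ℕ} (u v z : Fin n → Bool) (huv : (Q n).Adj u v) (huz : (Q n).Adj u z)
    (hvz : v ≠ z) : ∃ w, w ≠ u ∧ (Q n).Adj w v ∧ (Q n).Adj w z := by
  obtain ⟨a, rfl⟩ := (hamming_one_iff u v).mp huv
  obtain ⟨b, rfl⟩ := (hamming_one_iff u z).mp huz
  have hab : a ≠ b := fun h => hvz (by rw [h])
  set v := Function.update u a (!u a) with hv
  set z := Function.update u b (!u b) with hz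
  refine ⟨Function.update v b (!v b), ?_, ?_, ?_⟩
  · intro h
    have : Function.update v b (!v b) b = u b := by rw [h]
    simp [Function.update, hv, hab, Ne.symm hab] at this
  · exact (Q n).adj_symm ((hamming_one_iff v _).mpr ⟨b, rfl⟩)
  · have : Function.update v b (!v b) = Function.update z a (!z a) := by
      funext k
      by_cases hk : k = b
      · subst hk; simp [Function.update, hv, hz, hab, Ne.symm hab]
      · by_cases hk2 : k = a
        · subst hk2; simp [Function.update, hv, hz, hab, hk]
        · simp [Function.update, hv, hz, hk, hk2]
    rw [this]
    exact (Q n).adj_symm ((hamming_one_iff z _).mpr ⟨a, rfl⟩)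

lemma walk {n : ℕ} (j : Fin n) (P : (Fin n → Bool) → Prop)
    (hPj : ∀ x, P x → P (Function.update x j (!x j))) :
    ∀ (k : ℕ) (x z : Fin n → Bool), ¬ P x → P z →
      (Finset.univ.filter fun i => i ≠ j ∧ x i ≠ z i).card ≤ k →
      ∃ x' i, i ≠ j ∧ ¬ P x' ∧ P (Function.update x' i (!x' i)) := by
  intro k
  induction k with
  | zero =>
    intro x z hx hz hc
    have hfe : (Finset.univ.filter fun i => i ≠ j ∧ x i ≠ z i) = ∅ :=
      Finset.card_eq_zero.mp (Nat.le_zero.mp hc)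
    have hag : ∀ i, i ≠ j → x i = z i := by
      intro i hij
      by_contra hne
      have : i ∈ (Finset.univ.filter fun i => i ≠ j ∧ x i ≠ z i) := by simp [hij, hne]
      simp [hfe] at this
    by_cases hzj : z j = x j
    · have : z = x := funext fun i => by
        by_cases hij : i = j
        · subst hij; exact hzj
        · exact (hag i hij).symm
      exact (hx (this ▸ hz)).elim
    · have hx' : Function.update z j (!z j) = x := by
        funext k
        by_cases hk : k = j
        · subst hk; simp [Function.update, bool_flip (Ne.symm hzj)]
        · simp [Function.update, hk, (hag k hk).symm]
      exact (hx (hx' ▸ hPj z hz)).elim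
  | succ k ih =>
    intro x z hx hz hc
    by_cases hne : (Finset.univ.filter fun i => i ≠ j ∧ x i ≠ z i).Nonempty
    · obtain ⟨i, hi⟩ := hne
      simp only [Finset.mem_filter, Finset.mem_univ, true_and] at hi
      set x' := Function.update x i (!x i) with hx'def
      by_cases hPx' : P x'
      · exact ⟨x, i, hi.1, hx, hPx'⟩
      · refine ih x' z hPx' hz ?_
        have herase : (Finset.univ.filter fun l => l ≠ j ∧ x' l ≠ z l)
            = (Finset.univ.filter fun l => l ≠ j ∧ x l ≠ z l).erase i := by
          ext l
          by_cases hl : l = i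
          · subst hl
            simp [hx'def, Function.update, bool_flip hi.2]
          · simp [hx'def, Function.update, hl, Finset.mem_erase]
        rw [herase, Finset.card_erase_of_mem (by simp [hi.1, hi.2])]
        omega
    · exact ih x z hx hz (by
        rw [Finset.not_nonempty_iff_eq_empty.mp hne]; simp)

lemma mem_M2_elim {n : ℕ} {e : Sym2 (Fin n → Bool)} (he : e ∈ M2 n) {x : Fin n → Bool}
    (hx : x ∈ e) : e = s(x, cmpl x) := by
  obtain ⟨a, rfl⟩ := he
  rcases Sym2.mem_iff.mp hx with rfl | rfl
  · rfl
  · rw [cmpl_cmpl]; exact Sym2.eq_swap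

lemma mem_Mdir_elim {n : ℕ} {j : Fin n} {e : Sym2 (Fin n → Bool)} (he : e ∈ Mdir n j)
    {x : Fin n → Bool} (hx : x ∈ e) : e = s(x, Function.update x j (!x j)) := by
  obtain ⟨a, rfl⟩ := he
  rcases Sym2.mem_iff.mp hx with rfl | rfl
  · rfl
  · rw [flip_flip']; exact Sym2.eq_swap

lemma ne_cmpl {n : ℕ} (j : Fin n) (x : Fin n → Bool) : x ≠ cmpl x := by
  intro h
  have := congrFun h j
  simp [cmpl] at this

lemma flip_ne_cmpl {n : ℕ} (hn : 2 ≤ n) (j : Fin n) (x : Fin n → Bool) :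
    Function.update x j (!x j) ≠ cmpl x := by
  obtain ⟨k, hk⟩ := Fintype.exists_ne_of_one_lt_card (by simp; omega) j
  intro h
  have := congrFun h k
  simp [Function.update, hk, cmpl] at this

/-- A perfect matching `M ⊆ M₁ ∪ M₂` of `FQ n` with `M ≠ M₁` and `M ≠ M₂` is non-removable. -/
theorem stmt8 (n : ℕ) (hn : 4 ≤ n) (M : Set (Sym2 (Fin n → Bool)))
    (hM : IsPerfectMatchingSet (FQ n) M)
    (hsub : M ⊆ Mdir n ⟨n - 1, by omega⟩ ∪ M2 n)
    (h1 : M ≠ Mdir n ⟨n - 1, by omega⟩) (h2 : M ≠ M2 n) :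
    ¬ Nonempty ((FQ n).deleteEdges M ≃g Q n) := by
  rintro ⟨φ⟩
  set j : Fin n := ⟨n - 1, by omega⟩ with hj
  set A : (Fin n → Bool) → Prop := fun x => s(x, cmpl x) ∈ M with hA
  -- A is invariant under flipping coordinate j
  have hPj : ∀ x, A x → A (Function.update x j (!x j)) := by
    intro x hx
    set x' := Function.update x j (!x j) with hx'
    obtain ⟨e, ⟨heM, hxe⟩, -⟩ := hM.2 x'
    rcases hsub heM with he | he
    · -- e is the direction-j edge at x', i.e. s(x', x) : contradiction with A x
      have hee : e = s(x', x) := by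
        have := mem_Mdir_elim he hxe
        rwa [hx', flip_flip'] at this
      obtain ⟨f, hf, huf⟩ := hM.2 x
      have e1 : e = f := huf e ⟨heM, by rw [hee]; exact Sym2.mem_mk_right _ _⟩
      have e2 : s(x, cmpl x) = f := huf _ ⟨hx, Sym2.mem_mk_left _ _⟩
      have : s(x', x) = s(x, cmpl x) := by rw [← hee, e1, ← e2]
      rcases Sym2.eq_iff.mp this with ⟨h3, h4⟩ | ⟨h3, -⟩
      · exact absurd h4 (ne_cmpl j x)
      · exact absurd h3 (flip_ne_cmpl (by omega) j x)
    · have hh := mem_M2_elim he hxe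
      show s(x', cmpl x') ∈ M
      rw [← hh]; exact heM
  -- there is a vertex not satisfying A
  have hex_not : ∃ x, ¬ A x := by
    by_contra h
    push_neg at h
    apply h2
    apply Set.eq_of_subset_of_subset
    · intro e heM
      have hae : e.out.1 ∈ e := Sym2.out_fst_mem e
      obtain ⟨f, -, huf⟩ := hM.2 e.out.1
      have e1 := huf e ⟨heM, hae⟩
      have e2 := huf _ ⟨h e.out.1, Sym2.mem_mk_left _ _⟩
      exact ⟨e.out.1, e1.trans e2.symm⟩
    · rintro e ⟨a, rfl⟩
      exact h a
  -- there is a vertex satisfying A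
  have hex_yes : ∃ x, A x := by
    by_contra h
    push_neg at h
    apply h1
    apply Set.eq_of_subset_of_subset
    · intro e heM
      rcases hsub heM with he | he
      · exact he
      · have hae : e.out.1 ∈ e := Sym2.out_fst_mem e
        have hh : s(e.out.1, cmpl e.out.1) ∈ M := by
          rw [← mem_M2_elim he hae]; exact heM
        exact absurd hh (h e.out.1)
    · rintro e ⟨a, rfl⟩
      obtain ⟨f, ⟨hfM, haf⟩, -⟩ := hM.2 a
      rcases hsub hfM with hf | hf
      · have := mem_Mdir_elim hf haf
        rwa [← this]
      · have hh : s(a, cmpl a) ∈ M := by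
          rw [← mem_M2_elim hf haf]; exact hfM
        exact absurd hh (h a)
  -- find a boundary edge
  obtain ⟨x0, hx0⟩ := hex_not
  obtain ⟨z0, hz0⟩ := hex_yes
  obtain ⟨x, i, hij, hnAx, hAy⟩ :=
    walk j A hPj (Finset.univ.filter fun i => i ≠ j ∧ x0 i ≠ z0 i).card x0 z0 hx0 hz0 le_rfl
  set y := Function.update x i (!x i) with hy
  -- basic facts
  have hyi : y i = !x i := by simp [hy, Function.update]
  have hyj : y j = x j := by simp [hy, Function.update, Ne.symm hij]
  have hyl : ∀ l, l ≠ i → y l = x l := fun l hl => by simp [hy, Function.update, hl]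
  set G := (FQ n).deleteEdges M with hG
  -- the edge s(x, y) is not in M
  have hxyM : s(x, y) ∉ M := by
    intro hmem
    rcases hsub hmem with he | he
    · obtain ⟨a, ha⟩ := he
      rcases Sym2.eq_iff.mp ha with ⟨rfl, h4⟩ | ⟨h3, rfl⟩
      · have := congrFun h4 i
        rw [hyi] at this
        simp [Function.update, hij] at this
      · -- x = update y j (!y j)
        have := congrFun h3 i
        simp [Function.update, hij] at this
        rw [hyi] at this
        simp at this
    · obtain ⟨a, ha⟩ := he
      rcases Sym2.eq_iff.mp ha with ⟨rfl, h4⟩ | ⟨h3, rfl⟩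
      · have := congrFun h4 j
        rw [hyj] at this
        simp [cmpl] at this
      · have := congrFun h3 j
        simp [cmpl, hyj] at this
  -- G-adjacencies
  have hadj1 : G.Adj x (cmpl x) := by
    rw [hG, SimpleGraph.deleteEdges_adj]
    exact ⟨Or.inr ⟨ne_cmpl j x, rfl⟩, hnAx⟩
  have hadj2 : G.Adj x y := by
    rw [hG, SimpleGraph.deleteEdges_adj]
    exact ⟨Or.inl ((hamming_one_iff x y).mpr ⟨i, rfl⟩), hxyM⟩
  have hne12 : cmpl x ≠ y := by
    intro h
    have := congrFun h j
    rw [hyj] at this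
    simp [cmpl] at this
  -- transfer through φ
  obtain ⟨w, hwne, hw1, hw2⟩ := Q_prop (φ x) (φ (cmpl x)) (φ y)
    (φ.map_adj_iff.mpr hadj1) (φ.map_adj_iff.mpr hadj2)
    (fun h => hne12 (φ.injective h))
  set w' := φ.symm w with hw'
  have hw'1 : G.Adj w' (cmpl x) := by
    rw [← φ.map_adj_iff]
    rw [hw', φ.apply_symm_apply]
    exact hw1
  have hw'2 : G.Adj w' y := by
    rw [← φ.map_adj_iff]
    rw [hw', φ.apply_symm_apply]
    exact hw2
  have hw'x : w' ≠ x := by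
    intro h
    apply hwne
    rw [← h, hw', φ.apply_symm_apply]
  -- derive the contradiction
  rw [hG, SimpleGraph.deleteEdges_adj] at hw'1 hw'2
  rcases hw'1.1 with hd1 | ⟨-, hc1⟩
  · rcases hw'2.1 with hd2 | ⟨-, hc2⟩
    · -- triangle inequality contradiction
      have htri : hammingDist (cmpl x) y ≤ 2 := by
        calc hammingDist (cmpl x) y ≤ hammingDist (cmpl x) w' + hammingDist w' y :=
              hammingDist_triangle _ _ _
          _ ≤ 2 := by rw [hammingDist_comm (cmpl x) w']; omega
      have hbig : hammingDist (cmpl x) y = n - 1 := by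
        show (Finset.univ.filter fun k => cmpl x k ≠ y k).card = n - 1
        have : (Finset.univ.filter fun k => cmpl x k ≠ y k) = Finset.univ.erase i := by
          ext l
          by_cases hl : l = i
          · subst hl
            simp [cmpl, hyi]
          · simp [cmpl, hyl l hl, hl]
        rw [this, Finset.card_erase_of_mem (Finset.mem_univ i)]
        simp
      omega
    · -- w' = cmpl y, but the complement edge at y is in M
      have hw'y : w' = cmpl y := by
        rw [hc2, cmpl_cmpl]
      apply hw'2.2
      rw [hw'y, Sym2.eq_swap]
      exact hAy
  · -- w' = x, contradiction
    apply hw'x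
    have := congrArg cmpl hc1
    rw [cmpl_cmpl, cmpl_cmpl] at this
    exact this.symm
end
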